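/- For every natural number n ≥ 1, the Cartan characters s_k = k − 1 + n(n + (k−2)(n+1−k)) for 2 ≤ k ≤ n+1 satisfy Cartan's test with equality: ∑_{k=2}^{n+1} k·(k − 1 + n(n + (k−2)(n+1−k))) = 2·C(n+2,3) + 2n·C(n+3,4), where C(a,b) is the binomial coefficient; the right-hand side equals the dimension of the first prolongation of the curvature tableau of integrable torsion-free S¹·GL(n,ℝ)-structures. -/

import Mathlib

lemma c2_int (n : ℕ) : (Nat.choose (n + 2) 2 : ℤ) * 2 = ((n : ℤ) + 2) * ((n : ℤ) + 1) := by
  induction n with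
  | zero => norm_num
  | succ m ih =>
    rw [show m + 1 + 2 = (m + 2) + 1 from rfl, Nat.choose_succ_succ, Nat.choose_one_right]
    push_cast
    linear_combination ih

lemma c3_int (n : ℕ) :
    (Nat.choose (n + 2) 3 : ℤ) * 6 = ((n : ℤ) + 2) * ((n : ℤ) + 1) * (n : ℤ) := by
  induction n with
  | zero => norm_num
  | succ m ih =>
    rw [show m + 1 + 2 = (m + 2) + 1 from rfl, Nat.choose_succ_succ]
    push_cast
    linear_combination ih + 3 * c2_int m

lemma c4_int (n : ℕ) :
    (Nat.choose (n + 3) 4 : ℤ) * 24 = ((n : ℤ) + 3) * ((n : ℤ) + 2) * ((n : ℤ) + 1) * (n : ℤ) := by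
  induction n with
  | zero => norm_num
  | succ m ih =>
    rw [show m + 1 + 3 = (m + 3) + 1 from rfl, Nat.choose_succ_succ]
    push_cast
    have h3 := c3_int (m + 1)
    push_cast at h3
    linear_combination ih + 4 * h3

lemma sumG (n : ℕ) (m : ℕ) :
    12 * ∑ k ∈ Finset.range m,
        (k : ℤ) * ((k : ℤ) - 1 + (n : ℤ) * ((n : ℤ) + ((k : ℤ) - 2) * ((n : ℤ) + 1 - (k : ℤ))))
      = -3 * (n : ℤ) * ((m : ℤ) * ((m : ℤ) - 1))^2
        + 2 * ((n : ℤ)^2 + 3 * (n : ℤ) + 1) * ((m : ℤ) * ((m : ℤ) - 1) * (2 * (m : ℤ) - 1))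
        - 6 * ((n : ℤ) + 1)^2 * ((m : ℤ) * ((m : ℤ) - 1)) := by
  induction m with
  | zero => simp
  | succ p ih =>
    rw [Finset.sum_range_succ]
    push_cast
    push_cast at ih
    linear_combination ih

/-- **Cartan's test holds with equality for the curvature tableau.**
For `n ≥ 1`, `∑_{k=2}^{n+1} k·(k - 1 + n(n + (k-2)(n+1-k))) = 2·C(n+2,3) + 2n·C(n+3,4)`,
the dimension of the first prolongation of the tableau of integrable torsion-free
`S¹·GL(n,ℝ)`-structures. -/
theorem cartan_test_sum (n : ℕ) (hn : 1 ≤ n) :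
    (∑ k ∈ Finset.Icc 2 (n + 1),
        (k : ℤ) * ((k : ℤ) - 1 + (n : ℤ) * ((n : ℤ) + ((k : ℤ) - 2) * ((n : ℤ) + 1 - (k : ℤ)))))
      = 2 * (Nat.choose (n + 2) 3 : ℤ) + 2 * (n : ℤ) * (Nat.choose (n + 3) 4 : ℤ) := by
  set f : ℕ → ℤ := fun k =>
    (k : ℤ) * ((k : ℤ) - 1 + (n : ℤ) * ((n : ℤ) + ((k : ℤ) - 2) * ((n : ℤ) + 1 - (k : ℤ)))) with hf
  have hsplit : ∑ k ∈ Finset.Icc 2 (n + 1), f k = ∑ k ∈ Finset.range (n + 2), f k := by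
    have h1 : Finset.Icc 2 (n + 1) = Finset.Ico 2 (n + 2) := by
      exact (Finset.Ico_add_one_right_eq_Icc (a := 2) (b := n + 1)).symm
    rw [h1, Finset.range_eq_Ico]
    have h2 : ∑ k ∈ Finset.Ico 0 2, f k + ∑ k ∈ Finset.Ico 2 (n + 2), f k
        = ∑ k ∈ Finset.Ico 0 (n + 2), f k :=
      Finset.sum_Ico_consecutive _ (by omega) (by omega)
    have h3 : ∑ k ∈ Finset.Ico 0 2, f k = 0 := by
      rw [show Finset.Ico 0 2 = {0, 1} from rfl]
      simp [hf]
    omega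
  rw [hsplit]
  have hG := sumG n (n + 2)
  push_cast at hG
  have hc3 := c3_int n
  have hc4 := c4_int n
  have h12 : 12 * ∑ k ∈ Finset.range (n + 2), f k
      = 12 * (2 * (Nat.choose (n + 2) 3 : ℤ) + 2 * (n : ℤ) * (Nat.choose (n + 3) 4 : ℤ)) := by
    linear_combination hG - 4 * hc3 - (n : ℤ) * hc4
  linarith [h12]
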